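/- Let x_i^♮ ∈ R^n with atomic sets A_i (i = 1,…,k) be β-incoherent for some β ∈ (0,1], i.e., for each i, cos∠(−D_i, Σ_{j≠i} D_j) ≤ 1 − β where D_i = D(A_i, x_i^♮). Suppose x_i^* satisfy x_i^* − x_i^♮ ∈ D_i for each i. Then for every i, ‖x_i^* − x_i^♮‖ ≤ ‖Σ_{j=1}^k (x_j^* − x_j^♮)‖ / √β. -/

import Mathlib

open scoped Pointwise

open MeasureTheory ProbabilityTheory Set
open scoped RealInnerProductSpace

noncomputable def stdGaussian (n : ℕ) : Measure (EuclideanSpace ℝ (Fin n)) :=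
  Measure.map (EuclideanSpace.equiv (Fin n) ℝ).symm
    (Measure.pi fun _ : Fin n => gaussianReal 0 1)

/-- Statistical dimension via the sup formulation
`δ(K) = E[(sup{⟪g,y⟫ : y ∈ K ∩ Bⁿ})²]`. -/
noncomputable def statDim {n : ℕ} (K : Set (EuclideanSpace ℝ (Fin n))) : ℝ :=
  ∫ g, (sSup {r : ℝ | ∃ y, y ∈ K ∧ ‖y‖ ≤ 1 ∧ r = ⟪g, y⟫}) ^ 2 ∂(stdGaussian n)

/-- Gauge of an atomic set: `γ_A(x) = inf{λ ≥ 0 : x ∈ λ·conv(A ∪ {0})}`. -/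
noncomputable def agauge {n : ℕ} (A : Set (EuclideanSpace ℝ (Fin n)))
    (x : EuclideanSpace ℝ (Fin n)) : ℝ :=
  gauge (convexHull ℝ (insert 0 A)) x

/-- Descent cone `D(A,x) = cone{d : γ_A(x+d) ≤ γ_A(x)}`. -/
def descCone {n : ℕ} (A : Set (EuclideanSpace ℝ (Fin n))) (x : EuclideanSpace ℝ (Fin n)) :
    Set (EuclideanSpace ℝ (Fin n)) :=
  {d | ∃ c : ℝ, ∃ s, 0 ≤ c ∧ agauge A (x + s) ≤ agauge A x ∧ d = c • s}

lemma descCone_smul {n : ℕ} {A : Set (EuclideanSpace ℝ (Fin n))}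
    {x d : EuclideanSpace ℝ (Fin n)} (hd : d ∈ descCone A x) {t : ℝ} (ht : 0 ≤ t) :
    t • d ∈ descCone A x := by
  obtain ⟨c, s, hc, hg, rfl⟩ := hd
  exact ⟨t * c, s, mul_nonneg ht hc, hg, (mul_smul t c s).symm⟩

/-- Stable deconvolution: under `β`-incoherence of the descent cones, each error
`‖xᵢ* − xᵢ♮‖` is bounded by `‖Σⱼ (xⱼ* − xⱼ♮)‖/√β`. -/
theorem stable_deconvolution {n k : ℕ} (A : Fin k → Set (EuclideanSpace ℝ (Fin n)))
    (hA : ∀ i, IsCompact (A i))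
    (hA0 : ∀ i, (0 : EuclideanSpace ℝ (Fin n)) ∈ interior (A i))
    (xn xs : Fin k → EuclideanSpace ℝ (Fin n))
    (β : ℝ) (hβ : β ∈ Set.Ioc (0 : ℝ) 1)
    (hangle : ∀ i, ∀ u v, u ∈ -descCone (A i) (xn i) →
      v ∈ ∑ j ∈ Finset.univ.erase i, descCone (A j) (xn j) →
      ‖u‖ = 1 → ‖v‖ = 1 → ⟪u, v⟫ ≤ 1 - β)
    (hmem : ∀ i, xs i - xn i ∈ descCone (A i) (xn i)) :
    ∀ i, ‖xs i - xn i‖ ≤ ‖∑ j, (xs j - xn j)‖ / Real.sqrt β := by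
  obtain ⟨hβ0, hβ1⟩ := hβ
  have hsβ : 0 < Real.sqrt β := Real.sqrt_pos.mpr hβ0
  have hsβ1 : Real.sqrt β ≤ 1 := by
    rw [show (1:ℝ) = Real.sqrt 1 from (Real.sqrt_one).symm]
    exact Real.sqrt_le_sqrt hβ1
  intro i
  set e : Fin k → EuclideanSpace ℝ (Fin n) := fun j => xs j - xn j with he
  set w : EuclideanSpace ℝ (Fin n) := ∑ j ∈ Finset.univ.erase i, e j with hw
  have hsum : ∑ j, e j = e i + w := by
    rw [hw, Finset.add_sum_erase _ e (Finset.mem_univ i)]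
  set a := ‖e i‖ with ha
  set b := ‖w‖ with hb
  rw [le_div_iff₀ hsβ, hsum]
  rcases eq_or_lt_of_le (norm_nonneg (e i)) with h0 | ha0
  · rw [ha, ← h0, zero_mul]
    exact norm_nonneg _
  rcases eq_or_lt_of_le (norm_nonneg w) with hb0 | hb0
  · have hw0 : w = 0 := by
      have := hb0.symm
      rwa [norm_eq_zero] at this
    rw [hw0, add_zero]
    calc a * Real.sqrt β ≤ a * 1 :=
        mul_le_mul_of_nonneg_left hsβ1 (norm_nonneg _)
    _ = ‖e i‖ := by rw [mul_one]
  · -- main case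
    have hu : (a⁻¹ : ℝ) • (-(e i)) ∈ -descCone (A i) (xn i) := by
      rw [smul_neg]
      exact Set.neg_mem_neg.mpr (descCone_smul (hmem i) (by positivity))
    have hwmem : w ∈ ∑ j ∈ Finset.univ.erase i, descCone (A j) (xn j) :=
      Set.finset_sum_mem_finset_sum _ _ _ (fun j _ => hmem j)
    have hv : (b⁻¹ : ℝ) • w ∈ ∑ j ∈ Finset.univ.erase i, descCone (A j) (xn j) := by
      rw [Set.mem_finset_sum] at hwmem
      obtain ⟨g, hg, hgsum⟩ := hwmem
      rw [Set.mem_finset_sum]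
      refine ⟨fun j => (b⁻¹ : ℝ) • g j, fun hj => descCone_smul (hg hj) (by positivity), ?_⟩
      rw [← Finset.smul_sum, hgsum]
    have hun : ‖(a⁻¹ : ℝ) • (-(e i))‖ = 1 := by
      rw [norm_smul, norm_neg, norm_inv, Real.norm_eq_abs, abs_of_pos ha0]
      field_simp
    have hvn : ‖(b⁻¹ : ℝ) • w‖ = 1 := by
      rw [norm_smul, norm_inv, Real.norm_eq_abs, abs_of_pos hb0]
      field_simp
    have hip := hangle i _ _ hu hv hun hvn
    rw [real_inner_smul_left, real_inner_smul_right, inner_neg_left] at hip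
    have hab : a⁻¹ * (b⁻¹ * -⟪e i, w⟫) ≤ 1 - β := hip
    have hkey : -⟪e i, w⟫ ≤ (1 - β) * (a * b) := by
      have h1 : 0 < a * b := mul_pos ha0 hb0
      have := mul_le_mul_of_nonneg_left hab (le_of_lt h1)
      calc -⟪e i, w⟫ = a * b * (a⁻¹ * (b⁻¹ * -⟪e i, w⟫)) := by have ha' : a ≠ 0 := ne_of_gt ha0; have hb' : b ≠ 0 := ne_of_gt hb0; rw [show a * b * (a⁻¹ * (b⁻¹ * -⟪e i, w⟫)) = (a * a⁻¹) * (b * b⁻¹) * -⟪e i, w⟫ by ring, mul_inv_cancel₀ ha', mul_inv_cancel₀ hb', one_mul, one_mul]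
      _ ≤ a * b * (1 - β) := this
      _ = (1 - β) * (a * b) := by ring
    have hnormsq : ‖e i + w‖ ^ 2 = a ^ 2 + 2 * ⟪e i, w⟫ + b ^ 2 := by
      rw [norm_add_sq_real]
    have hlow : β * a ^ 2 ≤ ‖e i + w‖ ^ 2 := by
      rw [hnormsq]
      nlinarith [sq_nonneg (a - b), hkey]
    have : Real.sqrt β * a ≤ ‖e i + w‖ := by
      have h2 : (Real.sqrt β * a) ^ 2 ≤ ‖e i + w‖ ^ 2 := by
        rw [mul_pow, Real.sq_sqrt (le_of_lt hβ0)]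
        exact hlow
      have h3 := Real.sqrt_le_sqrt h2
      rwa [Real.sqrt_sq (by positivity), Real.sqrt_sq (norm_nonneg _)] at h3
    linarith [this, mul_comm a (Real.sqrt β)]
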